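/- Let k > 0, let α, β, γ, δ be complex numbers with Re(β) > Re(α) > 0 and Re(δ) > Re(γ) > 0, and let t, x be complex numbers with |x| < 1/k, |t| < 1/k and |(1−kx)t| < 1/k. Then Σ_{n≥0} [(β)_{n,k}(γ)_{n,k} / ((δ)_{n,k} n!)] · ₂F₁ₖ[−nk, α; β; x] · t^n = F_{1,k}(γ, β−α, α; δ; t, (1−kx)t). -/

import Mathlib

open MeasureTheory Complex

/-- Pochhammer k-symbol: (x)_{n,k} = x(x+k)...(x+(n-1)k). -/
noncomputable def kPoch (k : ℝ) (x : ℂ) (n : ℕ) : ℂ :=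
  ∏ i ∈ Finset.range n, (x + (i : ℂ) * (k : ℂ))

/-- k-hypergeometric function ₂F₁ₖ[a, b; c; x]. -/
noncomputable def hyp2F1k (k : ℝ) (a b c x : ℂ) : ℂ :=
  ∑' n : ℕ, kPoch k a n * kPoch k b n / kPoch k c n * x ^ n / (n.factorial : ℂ)

/-- First Appell k-function F_{1,k}(a, b, b'; c; x, y). -/
noncomputable def F1k (k : ℝ) (a b b' c x y : ℂ) : ℂ :=
  ∑' p : ℕ × ℕ,
    kPoch k a (p.1 + p.2) * kPoch k b p.1 * kPoch k b' p.2 / kPoch k c (p.1 + p.2)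
      * x ^ p.1 * y ^ p.2 / ((p.1.factorial : ℂ) * (p.2.factorial : ℂ))

/-- Second Appell k-function F_{2,k}(a, b, b'; c, c'; x, y). -/
noncomputable def F2k (k : ℝ) (a b b' c c' x y : ℂ) : ℂ :=
  ∑' p : ℕ × ℕ,
    kPoch k a (p.1 + p.2) * kPoch k b p.1 * kPoch k b' p.2
      / (kPoch k c p.1 * kPoch k c' p.2)
      * x ^ p.1 * y ^ p.2 / ((p.1.factorial : ℂ) * (p.2.factorial : ℂ))

/-- Third Appell k-function F_{3,k}(a, a', b, b'; c; x, y). -/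
noncomputable def F3k (k : ℝ) (a a' b b' c x y : ℂ) : ℂ :=
  ∑' p : ℕ × ℕ,
    kPoch k a p.1 * kPoch k a' p.2 * kPoch k b p.1 * kPoch k b' p.2
      / kPoch k c (p.1 + p.2)
      * x ^ p.1 * y ^ p.2 / ((p.1.factorial : ℂ) * (p.2.factorial : ℂ))

/-- k-Gamma function Γ_k(x) = ∫₀^∞ t^{x-1} e^{-t^k/k} dt. -/
noncomputable def kGammaF (k : ℝ) (x : ℂ) : ℂ :=
  ∫ t in Set.Ioi (0 : ℝ), (t : ℂ) ^ (x - 1) * Complex.exp (-((t ^ k : ℝ) : ℂ) / (k : ℂ))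

/-- k-Beta function B_k(x, y) = (1/k) ∫₀¹ t^{x/k-1} (1-t)^{y/k-1} dt. -/
noncomputable def kBetaF (k : ℝ) (x y : ℂ) : ℂ :=
  (1 / (k : ℂ)) * ∫ t in (0:ℝ)..1, (t : ℂ) ^ (x / (k : ℂ) - 1) * ((1 : ℂ) - (t : ℂ)) ^ (y / (k : ℂ) - 1)

section AuxLemmas
open Finset

lemma kPoch_zero (k : ℝ) (x : ℂ) : kPoch k x 0 = 1 := by simp [kPoch]

lemma kPoch_succ (k : ℝ) (x : ℂ) (n : ℕ) :
    kPoch k x (n + 1) = kPoch k x n * (x + (n : ℂ) * k) := by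
  simp [kPoch, Finset.prod_range_succ]

lemma kPoch_add (k : ℝ) (x : ℂ) (m n : ℕ) :
    kPoch k x (m + n) = kPoch k x m * kPoch k (x + (m : ℂ) * k) n := by
  unfold kPoch
  rw [Finset.prod_range_add]
  congr 1
  apply Finset.prod_congr rfl
  intro i _
  push_cast
  ring

lemma kPoch_ne_zero (k : ℝ) (hk : 0 < k) (x : ℂ) (hx : 0 < x.re) (n : ℕ) :
    kPoch k x n ≠ 0 := by
  unfold kPoch
  rw [Finset.prod_ne_zero_iff]
  intro i _ h
  have h2 : (x + (i : ℂ) * k).re = x.re + i * k := by simp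
  rw [h] at h2
  simp only [Complex.zero_re] at h2
  have : (0:ℝ) ≤ (i:ℝ) * k := mul_nonneg (Nat.cast_nonneg i) hk.le
  linarith

lemma kPoch_neg_nat_le (k : ℝ) (n m : ℕ) (h : m ≤ n) :
    kPoch k (-((n : ℂ) * k)) m = (-(k:ℂ)) ^ m * (n.descFactorial m : ℂ) := by
  induction m with
  | zero => simp [kPoch_zero]
  | succ m ih =>
    have hm : m ≤ n := Nat.le_of_succ_le h
    rw [kPoch_succ, ih hm, Nat.descFactorial_succ]
    have hcast : ((n - m : ℕ) : ℂ) = (n : ℂ) - (m : ℂ) := by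
      push_cast [Nat.cast_sub hm]; ring
    push_cast [hcast]
    ring

lemma kPoch_neg_nat_gt (k : ℝ) (n m : ℕ) (h : n < m) :
    kPoch k (-((n : ℂ) * k)) m = 0 := by
  unfold kPoch
  apply Finset.prod_eq_zero (Finset.mem_range.mpr h)
  ring

/-- Vandermonde for kPoch. -/
lemma kPoch_vandermonde (k : ℝ) (a b : ℂ) (j : ℕ) :
    ∑ p ∈ Finset.range (j + 1), (j.choose p : ℂ) * kPoch k a p * kPoch k b (j - p)
      = kPoch k (a + b) j := by
  induction j with
  | zero => simp [kPoch_zero]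
  | succ j ih =>
    have key : ∑ p ∈ Finset.range (j + 2), ((j+1).choose p : ℂ) * kPoch k a p * kPoch k b (j + 1 - p)
        = ∑ p ∈ Finset.range (j + 1),
            ((j.choose p : ℂ) * kPoch k a p * kPoch k b (j - p)) * (a + b + (j:ℂ) * k) := by
      have split : ∀ p ∈ Finset.range (j + 1),
          ((j.choose p : ℂ) * kPoch k a p * kPoch k b (j - p)) * (a + b + (j:ℂ) * k)
            = (j.choose p : ℂ) * kPoch k a (p+1) * kPoch k b (j - p)
              + (j.choose p : ℂ) * kPoch k a p * kPoch k b (j - p + 1) := by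
        intro p hp
        rw [Finset.mem_range] at hp
        have hpj : p ≤ j := Nat.lt_succ_iff.mp hp
        rw [kPoch_succ, kPoch_succ]
        have hc : ((j - p : ℕ) : ℂ) = (j : ℂ) - (p : ℂ) := by
          push_cast [Nat.cast_sub hpj]; ring
        rw [hc]
        ring
      rw [Finset.sum_congr rfl split, Finset.sum_add_distrib]
      -- LHS: peel off the p = 0 term
      rw [Finset.sum_range_succ' (fun p => ((j+1).choose p : ℂ) * kPoch k a p * kPoch k b (j + 1 - p)) (j+1)]
      have term1 : ∀ p ∈ Finset.range (j + 1),
          ((j+1).choose (p+1) : ℂ) * kPoch k a (p+1) * kPoch k b (j + 1 - (p+1))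
            = (j.choose p : ℂ) * kPoch k a (p+1) * kPoch k b (j - p)
              + (j.choose (p+1) : ℂ) * kPoch k a (p+1) * kPoch k b (j - p) := by
        intro p _
        rw [Nat.choose_succ_succ]
        push_cast
        ring
      rw [Finset.sum_congr rfl term1, Finset.sum_add_distrib]
      have second : (∑ p ∈ Finset.range (j+1), (j.choose (p+1) : ℂ) * kPoch k a (p+1) * kPoch k b (j - p))
            + ((j+1).choose 0 : ℂ) * kPoch k a 0 * kPoch k b (j + 1 - 0)
          = ∑ p ∈ Finset.range (j+1), (j.choose p : ℂ) * kPoch k a p * kPoch k b (j - p + 1) := by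
        have expand := Finset.sum_range_succ' (fun p => (j.choose p : ℂ) * kPoch k a p * kPoch k b (j + 1 - p)) (j+1)
        have drop : ∑ p ∈ Finset.range (j + 2), (j.choose p : ℂ) * kPoch k a p * kPoch k b (j + 1 - p)
            = ∑ p ∈ Finset.range (j + 1), (j.choose p : ℂ) * kPoch k a p * kPoch k b (j + 1 - p) := by
          rw [Finset.sum_range_succ]
          simp [Nat.choose_succ_self]
        have fix : ∀ p ∈ Finset.range (j+1),
            (j.choose p : ℂ) * kPoch k a p * kPoch k b (j + 1 - p)
              = (j.choose p : ℂ) * kPoch k a p * kPoch k b (j - p + 1) := by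
          intro p hp
          rw [Finset.mem_range] at hp
          have : j + 1 - p = j - p + 1 := by omega
          rw [this]
        have fix2 : ∀ p ∈ Finset.range (j+1),
            (j.choose (p+1) : ℂ) * kPoch k a (p+1) * kPoch k b (j + 1 - (p+1))
              = (j.choose (p+1) : ℂ) * kPoch k a (p+1) * kPoch k b (j - p) := by
          intro p hp
          rw [Finset.mem_range] at hp
          have : j + 1 - (p + 1) = j - p := by omega
          rw [this]
        rw [drop, Finset.sum_congr rfl fix, Finset.sum_congr rfl fix2] at expand
        simp only [Nat.choose_zero_right, Nat.cast_one] at expand ⊢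
        rw [← expand]
      rw [add_assoc, second]
    rw [key, ← Finset.sum_mul, ih, ← kPoch_succ]

lemma trinom (n p m : ℕ) (h : p + m ≤ n) :
    n.choose p * (n - p).choose m = n.choose m * (n - m).choose p := by
  have hp : p ≤ n := le_trans (Nat.le_add_right _ _) h
  have hm : m ≤ n - p := by omega
  rw [← Nat.choose_symm hp, Nat.choose_mul hm]
  congr 1
  have h1 : n - p - m ≤ n - m := by omega
  rw [← Nat.choose_symm h1]
  congr 1
  omega

/-- The key finite coefficient identity. -/
lemma coeff_identity (k : ℝ) (α β x : ℂ) (n : ℕ) :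
    ∑ m ∈ Finset.range (n+1),
        (n.choose m : ℂ) * kPoch k α m * kPoch k (β + (m:ℂ) * k) (n - m) * (-(k:ℂ) * x) ^ m
      = ∑ p ∈ Finset.range (n+1),
          (n.choose p : ℂ) * kPoch k (β - α) p * kPoch k α (n - p)
            * ((1:ℂ) - (k:ℂ) * x) ^ (n - p) := by
  -- Expand the binomial on the RHS
  have expand : ∀ p ∈ Finset.range (n+1),
      (n.choose p : ℂ) * kPoch k (β - α) p * kPoch k α (n - p) * ((1:ℂ) - (k:ℂ) * x) ^ (n - p)
        = ∑ m ∈ Finset.range (n+1),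
            (n.choose p : ℂ) * kPoch k (β - α) p * kPoch k α (n - p)
              * (((n-p).choose m : ℂ) * (-(k:ℂ) * x) ^ m) := by
    intro p _
    have hb : ((1:ℂ) - (k:ℂ) * x) = (-(k:ℂ) * x) + 1 := by ring
    rw [hb, add_pow, Finset.mul_sum]
    rw [Finset.sum_subset (Finset.range_subset_range.mpr (by omega : n - p + 1 ≤ n + 1))]
    · exact Finset.sum_congr rfl (fun m _ => by ring)
    · intro m _ hm
      rw [Finset.mem_range, not_lt] at hm
      rw [Nat.choose_eq_zero_of_lt (show n - p < m by omega)]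
      simp
  rw [Finset.sum_congr rfl expand, Finset.sum_comm]
  -- now fix m, transform the inner sum over p
  apply Finset.sum_congr rfl
  intro m hm
  rw [Finset.mem_range] at hm
  have hmn : m ≤ n := by omega
  -- termwise rewrite of the inner summand
  have termwise : ∀ p ∈ Finset.range (n+1),
      (n.choose p : ℂ) * kPoch k (β - α) p * kPoch k α (n - p)
          * (((n-p).choose m : ℂ) * (-(k:ℂ) * x) ^ m)
        = (n.choose m : ℂ) * kPoch k α m * (-(k:ℂ) * x) ^ m
            * (((n-m).choose p : ℂ) * kPoch k (β - α) p * kPoch k (α + (m:ℂ) * k) (n - m - p)) := by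
    intro p hp
    rw [Finset.mem_range] at hp
    by_cases hpm : p + m ≤ n
    · have hsplit : kPoch k α (n - p) = kPoch k α m * kPoch k (α + (m:ℂ) * k) (n - p - m) := by
        conv_lhs => rw [show n - p = m + (n - p - m) from by omega]
        rw [kPoch_add]
      have hidx : n - p - m = n - m - p := by omega
      have hchoose : (n.choose p : ℂ) * ((n-p).choose m : ℂ)
          = (n.choose m : ℂ) * ((n-m).choose p : ℂ) := by
        rw [← Nat.cast_mul, ← Nat.cast_mul, trinom n p m hpm]
      rw [hsplit, hidx]
      calc (n.choose p : ℂ) * kPoch k (β - α) p * (kPoch k α m * kPoch k (α + (m:ℂ)*k) (n-m-p))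
            * (((n-p).choose m : ℂ) * (-(k:ℂ) * x) ^ m)
          = ((n.choose p : ℂ) * ((n-p).choose m : ℂ)) * (kPoch k (β - α) p
              * kPoch k α m * kPoch k (α + (m:ℂ)*k) (n-m-p) * (-(k:ℂ) * x) ^ m) := by ring
        _ = ((n.choose m : ℂ) * ((n-m).choose p : ℂ)) * (kPoch k (β - α) p
              * kPoch k α m * kPoch k (α + (m:ℂ)*k) (n-m-p) * (-(k:ℂ) * x) ^ m) := by rw [hchoose]
        _ = _ := by ring
    · have h1 : ((n-p).choose m : ℂ) = 0 := by
        rw [Nat.choose_eq_zero_of_lt (by omega)]; simp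
      have h2 : ((n-m).choose p : ℂ) = 0 := by
        rw [Nat.choose_eq_zero_of_lt (by omega)]; simp
      rw [h1, h2]
      ring
  rw [Finset.sum_congr rfl termwise, ← Finset.mul_sum]
  -- shrink the range and apply Vandermonde
  have shrink : ∑ p ∈ Finset.range (n+1),
      (((n-m).choose p : ℂ) * kPoch k (β - α) p * kPoch k (α + (m:ℂ) * k) (n - m - p))
        = ∑ p ∈ Finset.range (n - m + 1),
            (((n-m).choose p : ℂ) * kPoch k (β - α) p * kPoch k (α + (m:ℂ) * k) (n - m - p)) := by
    rw [Finset.sum_subset (Finset.range_subset_range.mpr (by omega : n - m + 1 ≤ n + 1))]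
    intro p _ hp
    rw [Finset.mem_range, not_lt] at hp
    rw [Nat.choose_eq_zero_of_lt (show n - m < p by omega)]
    simp
  rw [shrink, kPoch_vandermonde k (β - α) (α + (m:ℂ)*k) (n - m)]
  have : β - α + (α + (m:ℂ)*k) = β + (m:ℂ)*k := by ring
  rw [this]
  ring

/-- The terminating 2F1k as a finite sum. -/
lemma hyp2F1k_terminating (k : ℝ) (α β x : ℂ) (n : ℕ) :
    hyp2F1k k (-((n : ℂ) * (k : ℂ))) α β x
      = ∑ m ∈ Finset.range (n + 1),
          kPoch k (-((n : ℂ) * k)) m * kPoch k α m / kPoch k β m * x ^ m / (m.factorial : ℂ) := by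
  unfold hyp2F1k
  apply tsum_eq_sum
  intro m hm
  rw [Finset.mem_range, not_lt] at hm
  rw [kPoch_neg_nat_gt k n m (by omega)]
  simp

/-- Per-index identity: the n-th term of the LHS equals the antidiagonal partial sum of F1k. -/
lemma term_eq (k : ℝ) (hk : 0 < k) (α β γ δ t x : ℂ)
    (hβ : 0 < β.re) (hδ : 0 < δ.re) (n : ℕ) :
    kPoch k β n * kPoch k γ n / (kPoch k δ n * (n.factorial : ℂ)) *
        hyp2F1k k (-((n : ℂ) * (k : ℂ))) α β x * t ^ n
      = ∑ pq ∈ Finset.HasAntidiagonal.antidiagonal n,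
          kPoch k γ (pq.1 + pq.2) * kPoch k (β - α) pq.1 * kPoch k α pq.2
              / kPoch k δ (pq.1 + pq.2)
            * t ^ pq.1 * ((1 - (k:ℂ) * x) * t) ^ pq.2
            / ((pq.1.factorial : ℂ) * (pq.2.factorial : ℂ)) := by
  have hδn : kPoch k δ n ≠ 0 := kPoch_ne_zero k hk δ hδ n
  have hfn : ((n.factorial : ℂ)) ≠ 0 := Nat.cast_ne_zero.mpr n.factorial_ne_zero
  -- Step 1: β-poch times the terminating sum
  have hbh : kPoch k β n * hyp2F1k k (-((n : ℂ) * (k : ℂ))) α β x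
      = ∑ m ∈ Finset.range (n + 1),
          (n.choose m : ℂ) * kPoch k α m * kPoch k (β + (m:ℂ) * k) (n - m)
            * (-(k:ℂ) * x) ^ m := by
    rw [hyp2F1k_terminating, Finset.mul_sum]
    apply Finset.sum_congr rfl
    intro m hmr
    rw [Finset.mem_range] at hmr
    have hmn : m ≤ n := by omega
    have hβm : kPoch k β m ≠ 0 := kPoch_ne_zero k hk β hβ m
    have hfm : ((m.factorial : ℂ)) ≠ 0 := Nat.cast_ne_zero.mpr m.factorial_ne_zero
    have hsplit : kPoch k β n = kPoch k β m * kPoch k (β + (m:ℂ) * k) (n - m) := by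
      conv_lhs => rw [show n = m + (n - m) from by omega]
      rw [kPoch_add]
    rw [kPoch_neg_nat_le k n m hmn, hsplit]
    have hdesc : ((n.descFactorial m : ℕ) : ℂ) = (m.factorial : ℂ) * (n.choose m : ℂ) := by
      rw [Nat.descFactorial_eq_factorial_mul_choose]; push_cast; ring
    rw [hdesc]
    have hpow : (-(k:ℂ)) ^ m * x ^ m = (-(k:ℂ) * x) ^ m := by rw [← mul_pow]
    field_simp
    ring
  -- Step 2: rewrite the antidiagonal sum
  rw [Finset.Nat.sum_antidiagonal_eq_sum_range_succ_mk]
  have rhs_eq : ∀ p ∈ Finset.range (n + 1),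
      kPoch k γ (p + (n - p)) * kPoch k (β - α) p * kPoch k α (n - p)
          / kPoch k δ (p + (n - p))
        * t ^ p * ((1 - (k:ℂ) * x) * t) ^ (n - p)
        / ((p.factorial : ℂ) * ((n - p).factorial : ℂ))
      = kPoch k γ n / (kPoch k δ n * (n.factorial : ℂ)) * t ^ n
          * ((n.choose p : ℂ) * kPoch k (β - α) p * kPoch k α (n - p)
              * ((1:ℂ) - (k:ℂ) * x) ^ (n - p)) := by
    intro p hp
    rw [Finset.mem_range] at hp
    have hpn : p ≤ n := by omega
    have hadd : p + (n - p) = n := by omega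
    rw [hadd]
    have hfp : ((p.factorial : ℂ)) ≠ 0 := Nat.cast_ne_zero.mpr p.factorial_ne_zero
    have hfq : (((n - p).factorial : ℂ)) ≠ 0 := Nat.cast_ne_zero.mpr (n - p).factorial_ne_zero
    have hchoose : (n.factorial : ℂ) = (n.choose p : ℂ) * (p.factorial : ℂ) * ((n - p).factorial : ℂ) := by
      rw [← Nat.choose_mul_factorial_mul_factorial hpn]; push_cast; ring
    have hpow : ((1 - (k:ℂ) * x) * t) ^ (n - p) = (1 - (k:ℂ) * x) ^ (n - p) * t ^ (n - p) := by
      rw [mul_pow]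
    have hpt : t ^ p * t ^ (n - p) = t ^ n := by
      rw [← pow_add, hadd]
    rw [hpow]
    field_simp
    rw [hchoose]
    ring_nf
    rw [← hpt]
    ring
  rw [Finset.sum_congr rfl rhs_eq, ← Finset.mul_sum, ← coeff_identity k α β x n]
  rw [← hbh] at *
  field_simp

/-- Polynomial bound for ratios of arithmetic-progression products. -/
lemma prod_ratio_bound (k d c : ℝ) (hk : 0 < k) (hd : 0 < d) (hc : 0 ≤ c) :
    ∃ C : ℝ, ∃ N : ℕ, 0 ≤ C ∧ ∀ n : ℕ,
      ∏ i ∈ Finset.range n, (c + i * k) ≤ C * (1 + n) ^ N * ∏ i ∈ Finset.range n, (d + i * k) := by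
  obtain ⟨N0, hN0⟩ := exists_nat_ge ((c - d) / k)
  set N : ℕ := N0 + 1 with hN
  have hNk : k ≤ d + N * k := by
    have h1 : (1:ℝ) ≤ (N:ℝ) := by push_cast [hN]; linarith [Nat.cast_nonneg (α := ℝ) N0]
    nlinarith
  have hcd : c ≤ d + N * k := by
    have h2 : (c - d) / k ≤ N := by
      push_cast [hN]; linarith
    calc c = d + ((c - d)/k) * k := by field_simp; ring
    _ ≤ d + (N:ℝ) * k := by nlinarith [h2]
  set A : ℝ := (d + N * k) / d with hA
  have hA0 : 0 < A := by positivity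
  refine ⟨A ^ N, N, by positivity, fun n => ?_⟩
  have FposN : (0:ℝ) < ∏ j ∈ Finset.range N, (d + j * k) :=
    Finset.prod_pos (fun j _ => by positivity)
  have Fposn : (0:ℝ) < ∏ j ∈ Finset.range n, (d + j * k) :=
    Finset.prod_pos (fun j _ => by positivity)
  -- Step 1: each factor c + ik ≤ d + (N+i)k
  have step1 : ∏ i ∈ Finset.range n, (c + i * k) ≤ ∏ i ∈ Finset.range n, (d + (N + i : ℕ) * k) := by
    apply Finset.prod_le_prod
    · intro i _; positivity
    · intro i _
      have hcast : ((N + i : ℕ):ℝ) = (N:ℝ) + (i:ℝ) := by push_cast; ring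
      rw [hcast, add_mul]
      linarith
  -- Step 2: ∏_{i<n} (d + (N+i)k) * F N = F n * ∏_{j<N} (d + (n+j)k)
  have step2 : (∏ i ∈ Finset.range n, (d + (N + i : ℕ) * k)) * ∏ j ∈ Finset.range N, (d + j * k)
      = (∏ i ∈ Finset.range n, (d + i * k)) * ∏ j ∈ Finset.range N, (d + (n + j : ℕ) * k) := by
    have e1 : ∏ i ∈ Finset.range (N + n), (d + i * k)
        = (∏ j ∈ Finset.range N, (d + j * k)) * ∏ i ∈ Finset.range n, (d + (N + i : ℕ) * k) := by
      rw [Finset.prod_range_add]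
    have e2 : ∏ i ∈ Finset.range (n + N), (d + i * k)
        = (∏ i ∈ Finset.range n, (d + i * k)) * ∏ j ∈ Finset.range N, (d + (n + j : ℕ) * k) := by
      rw [Finset.prod_range_add]
    have hnN : N + n = n + N := by omega
    rw [hnN] at e1
    rw [mul_comm, ← e1]
    exact e2
  -- Step 3: ∏_{j<N} (d + (n+j)k) ≤ A^N (1+n)^N F N
  have step3 : ∏ j ∈ Finset.range N, (d + (n + j : ℕ) * k)
      ≤ A ^ N * (1 + n) ^ N * ∏ j ∈ Finset.range N, (d + j * k) := by
    have perfac : ∀ j ∈ Finset.range N, (d + (n + j : ℕ) * k) ≤ (d + j * k) * (A * (1 + n)) := by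
      intro j hj
      rw [Finset.mem_range] at hj
      have hjN : (j:ℝ) ≤ (N:ℝ) := by exact_mod_cast hj.le
      have hAd : (d + j * k) * A ≥ d + N * k := by
        rw [hA]
        rw [ge_iff_le, ← sub_nonneg]
        have : (d + j * k) * ((d + N * k) / d) - (d + N * k) = (j * k) * (d + N * k) / d := by
          field_simp; ring
        rw [this]
        have : (0:ℝ) < d + N * k := by positivity
        positivity
      have hn0 : (0:ℝ) ≤ (n:ℝ) := Nat.cast_nonneg n
      push_cast
      calc d + ((n:ℝ) + j) * k = d + j * k + n * k := by ring
        _ ≤ (d + N * k) + n * (d + N * k) := by nlinarith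
        _ = (d + N * k) * (1 + n) := by ring
        _ ≤ ((d + j * k) * A) * (1 + n) := by nlinarith
        _ = (d + j * k) * (A * (1 + n)) := by ring
    calc ∏ j ∈ Finset.range N, (d + (n + j : ℕ) * k)
        ≤ ∏ j ∈ Finset.range N, ((d + j * k) * (A * (1 + n))) := by
          apply Finset.prod_le_prod
          · intro j _; positivity
          · exact perfac
      _ = (∏ j ∈ Finset.range N, (d + j * k)) * (A * (1 + n)) ^ N := by
          rw [Finset.prod_mul_distrib, Finset.prod_const, Finset.card_range]
      _ = A ^ N * (1 + n) ^ N * ∏ j ∈ Finset.range N, (d + j * k) := by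
          rw [mul_pow]; ring
  -- combine
  have key : (∏ i ∈ Finset.range n, (d + (N + i : ℕ) * k))
      ≤ A ^ N * (1 + n) ^ N * ∏ i ∈ Finset.range n, (d + i * k) := by
    have h3 := mul_le_mul_of_nonneg_left step3 Fposn.le
    rw [← step2] at h3
    have hre : (∏ i ∈ Finset.range n, (d + i * k))
        * (A ^ N * (1 + n) ^ N * ∏ j ∈ Finset.range N, (d + j * k))
        = (A ^ N * (1 + n) ^ N * ∏ i ∈ Finset.range n, (d + i * k))
          * ∏ j ∈ Finset.range N, (d + j * k) := by ring
    rw [hre] at h3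
    exact le_of_mul_le_mul_right h3 FposN
  exact le_trans step1 key

lemma norm_kPoch_le (k : ℝ) (hk : 0 ≤ k) (z : ℂ) (n : ℕ) :
    ‖kPoch k z n‖ ≤ ∏ i ∈ Finset.range n, (‖z‖ + i * k) := by
  unfold kPoch
  rw [norm_prod]
  apply Finset.prod_le_prod
  · intro i _
    exact norm_nonneg _
  · intro i _
    calc ‖z + (i:ℂ) * (k:ℂ)‖ ≤ ‖z‖ + ‖(i:ℂ) * (k:ℂ)‖ := norm_add_le _ _
      _ = ‖z‖ + i * k := by
          rw [norm_mul]
          simp [Complex.norm_natCast, Complex.norm_real, _root_.abs_of_nonneg hk]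

lemma norm_kPoch_ge (k : ℝ) (hk : 0 < k) (z : ℂ) (hz : 0 < z.re) (n : ℕ) :
    ∏ i ∈ Finset.range n, (z.re + i * k) ≤ ‖kPoch k z n‖ := by
  unfold kPoch
  rw [norm_prod]
  apply Finset.prod_le_prod
  · intro i _; positivity
  · intro i _
    have : (z + (i:ℂ) * (k:ℂ)).re = z.re + i * k := by simp
    calc z.re + i * k = (z + (i:ℂ) * (k:ℂ)).re := this.symm
      _ ≤ ‖z + (i:ℂ) * (k:ℂ)‖ := Complex.re_le_norm _
      _ = ‖z + (i:ℂ) * (k:ℂ)‖ := rfl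

lemma summable_one_add_pow_mul_geometric (M : ℕ) (ρ : ℝ) (h0 : 0 ≤ ρ) (h1 : ρ < 1) :
    Summable (fun n : ℕ => (1 + (n:ℝ)) ^ M * ρ ^ n) := by
  have he : ∀ n : ℕ, (1 + (n:ℝ)) ^ M * ρ ^ n
      = ∑ j ∈ Finset.range (M + 1), ((1:ℝ) ^ j * (n:ℝ) ^ (M - j) * (M.choose j : ℝ)) * ρ ^ n := by
    intro n
    rw [add_pow, Finset.sum_mul]
  apply Summable.congr _ (fun n => (he n).symm)
  apply summable_sum
  intro j _
  have hρ : ‖ρ‖ < 1 := by rwa [Real.norm_eq_abs, _root_.abs_of_nonneg h0]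
  have := (summable_pow_mul_geometric_of_norm_lt_one (M - j) hρ).mul_left ((M.choose j : ℝ))
  apply this.congr
  intro n
  simp
  ring

lemma one_add_sum_le (p q : ℕ) : (1 + ((p + q : ℕ) : ℝ)) ≤ (1 + p) * (1 + q) := by
  push_cast
  nlinarith [Nat.cast_nonneg (α := ℝ) p, Nat.cast_nonneg (α := ℝ) q]

/-- Summability of the Appell F1k terms. -/
lemma summable_F1k_terms (k : ℝ) (hk : 0 < k) (a b b' c ta tb : ℂ)
    (hc : 0 < c.re) (hta : ‖ta‖ < 1 / k) (htb : ‖tb‖ < 1 / k) :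
    Summable (fun pq : ℕ × ℕ =>
      kPoch k a (pq.1 + pq.2) * kPoch k b pq.1 * kPoch k b' pq.2 / kPoch k c (pq.1 + pq.2)
        * ta ^ pq.1 * tb ^ pq.2 / ((pq.1.factorial : ℂ) * (pq.2.factorial : ℂ))) := by
  obtain ⟨C1, N1, hC1nn, hC1⟩ := prod_ratio_bound k c.re ‖a‖ hk hc (norm_nonneg a)
  obtain ⟨C2, N2, hC2nn, hC2⟩ := prod_ratio_bound k k ‖b‖ hk hk (norm_nonneg b)
  obtain ⟨C3, N3, hC3nn, hC3⟩ := prod_ratio_bound k k ‖b'‖ hk hk (norm_nonneg b')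
  set ρ1 : ℝ := k * ‖ta‖ with hρ1
  set ρ2 : ℝ := k * ‖tb‖ with hρ2
  have hρ1nn : 0 ≤ ρ1 := by positivity
  have hρ2nn : 0 ≤ ρ2 := by positivity
  have hρ1lt : ρ1 < 1 := by
    rw [hρ1]
    calc k * ‖ta‖ < k * (1 / k) := by
          exact mul_lt_mul_of_pos_left hta hk
      _ = 1 := by field_simp
  have hρ2lt : ρ2 < 1 := by
    rw [hρ2]
    calc k * ‖tb‖ < k * (1 / k) := by
          exact mul_lt_mul_of_pos_left htb hk
      _ = 1 := by field_simp
  -- the real product of arithmetic progression k + ik equals k^n * n!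
  have hfac : ∀ n : ℕ, ∏ i ∈ Finset.range n, (k + i * k) = k ^ n * (n.factorial : ℝ) := by
    intro n
    have : ∀ i ∈ Finset.range n, k + i * k = k * (i + 1) := by
      intro i _; ring
    rw [Finset.prod_congr rfl this, Finset.prod_mul_distrib, Finset.prod_const, Finset.card_range]
    congr 1
    have hcast : ((∏ x ∈ Finset.range n, (x + 1) : ℕ) : ℝ) = ∏ x ∈ Finset.range n, ((x:ℝ) + 1) := by
      push_cast
      rfl
    rw [← hcast, Finset.prod_range_add_one_eq_factorial]
  -- summable majorant
  have hg : Summable (fun pq : ℕ × ℕ =>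
      (C1 * C2 * C3 * ((1 + (pq.1:ℝ)) ^ (N1 + N2) * ρ1 ^ pq.1))
        * ((1 + (pq.2:ℝ)) ^ (N1 + N3) * ρ2 ^ pq.2)) := by
    have hf1 : Summable (fun p : ℕ => C1 * C2 * C3 * ((1 + (p:ℝ)) ^ (N1 + N2) * ρ1 ^ p)) :=
      (summable_one_add_pow_mul_geometric (N1 + N2) ρ1 hρ1nn hρ1lt).mul_left (C1 * C2 * C3)
    have hf2 : Summable (fun q : ℕ => (1 + (q:ℝ)) ^ (N1 + N3) * ρ2 ^ q) :=
      summable_one_add_pow_mul_geometric (N1 + N3) ρ2 hρ2nn hρ2lt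
    have hn1 : 0 ≤ (fun p : ℕ => C1 * C2 * C3 * ((1 + (p:ℝ)) ^ (N1 + N2) * ρ1 ^ p)) := by
      intro p
      dsimp only
      positivity
    have hn2 : 0 ≤ (fun q : ℕ => (1 + (q:ℝ)) ^ (N1 + N3) * ρ2 ^ q) := by
      intro q
      dsimp only
      positivity
    exact hf1.mul_of_nonneg hf2 hn1 hn2
  apply Summable.of_norm_bounded hg
  rintro ⟨p, q⟩
  set n := p + q with hn
  have hδpos : (0:ℝ) < ∏ i ∈ Finset.range n, (c.re + i * k) :=
    Finset.prod_pos (fun i _ => by positivity)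
  have hδnorm : (0:ℝ) < ‖kPoch k c n‖ := lt_of_lt_of_le hδpos (norm_kPoch_ge k hk c hc n)
  have hfp : (0:ℝ) < (p.factorial : ℝ) := by exact_mod_cast p.factorial_pos
  have hfq : (0:ℝ) < (q.factorial : ℝ) := by exact_mod_cast q.factorial_pos
  have h1 : ‖kPoch k a n‖ / ‖kPoch k c n‖ ≤ C1 * (1 + n) ^ N1 := by
    rw [div_le_iff₀ hδnorm]
    calc ‖kPoch k a n‖ ≤ ∏ i ∈ Finset.range n, (‖a‖ + i * k) := norm_kPoch_le k hk.le a n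
      _ ≤ C1 * (1 + n) ^ N1 * ∏ i ∈ Finset.range n, (c.re + i * k) := hC1 n
      _ ≤ C1 * (1 + n) ^ N1 * ‖kPoch k c n‖ := by
          apply mul_le_mul_of_nonneg_left (norm_kPoch_ge k hk c hc n)
          positivity
  have h2 : ‖kPoch k b p‖ / (p.factorial : ℝ) ≤ C2 * (1 + p) ^ N2 * k ^ p := by
    rw [div_le_iff₀ hfp]
    calc ‖kPoch k b p‖ ≤ ∏ i ∈ Finset.range p, (‖b‖ + i * k) := norm_kPoch_le k hk.le b p
      _ ≤ C2 * (1 + p) ^ N2 * ∏ i ∈ Finset.range p, (k + i * k) := hC2 p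
      _ = C2 * (1 + p) ^ N2 * (k ^ p * (p.factorial : ℝ)) := by rw [hfac p]
      _ = C2 * (1 + p) ^ N2 * k ^ p * (p.factorial : ℝ) := by ring
  have h3 : ‖kPoch k b' q‖ / (q.factorial : ℝ) ≤ C3 * (1 + q) ^ N3 * k ^ q := by
    rw [div_le_iff₀ hfq]
    calc ‖kPoch k b' q‖ ≤ ∏ i ∈ Finset.range q, (‖b'‖ + i * k) := norm_kPoch_le k hk.le b' q
      _ ≤ C3 * (1 + q) ^ N3 * ∏ i ∈ Finset.range q, (k + i * k) := hC3 q
      _ = C3 * (1 + q) ^ N3 * (k ^ q * (q.factorial : ℝ)) := by rw [hfac q]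
      _ = C3 * (1 + q) ^ N3 * k ^ q * (q.factorial : ℝ) := by ring
  have hnorm : ‖kPoch k a (p + q) * kPoch k b p * kPoch k b' q / kPoch k c (p + q)
        * ta ^ p * tb ^ q / ((p.factorial : ℂ) * (q.factorial : ℂ))‖
      = (‖kPoch k a n‖ / ‖kPoch k c n‖) * (‖kPoch k b p‖ / (p.factorial : ℝ))
        * (‖kPoch k b' q‖ / (q.factorial : ℝ)) * ‖ta‖ ^ p * ‖tb‖ ^ q := by
    simp only [norm_div, norm_mul, norm_pow, Complex.norm_natCast]
    rw [← hn]
    ring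
  rw [hnorm]
  have hd1 : 0 ≤ ‖kPoch k a n‖ / ‖kPoch k c n‖ := div_nonneg (norm_nonneg _) (norm_nonneg _)
  have hd2 : 0 ≤ ‖kPoch k b p‖ / (p.factorial : ℝ) := div_nonneg (norm_nonneg _) hfp.le
  have hd3 : 0 ≤ ‖kPoch k b' q‖ / (q.factorial : ℝ) := div_nonneg (norm_nonneg _) hfq.le
  have hb1 : 0 ≤ C1 * (1 + (n:ℝ)) ^ N1 := le_trans hd1 h1
  have hb2 : 0 ≤ C2 * (1 + (p:ℝ)) ^ N2 * k ^ p := le_trans hd2 h2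
  have s12 : (‖kPoch k a n‖ / ‖kPoch k c n‖) * (‖kPoch k b p‖ / (p.factorial : ℝ))
      ≤ (C1 * (1 + (n:ℝ)) ^ N1) * (C2 * (1 + (p:ℝ)) ^ N2 * k ^ p) :=
    mul_le_mul h1 h2 hd2 hb1
  have s123 : (‖kPoch k a n‖ / ‖kPoch k c n‖) * (‖kPoch k b p‖ / (p.factorial : ℝ))
        * (‖kPoch k b' q‖ / (q.factorial : ℝ))
      ≤ (C1 * (1 + (n:ℝ)) ^ N1) * (C2 * (1 + (p:ℝ)) ^ N2 * k ^ p)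
        * (C3 * (1 + (q:ℝ)) ^ N3 * k ^ q) :=
    mul_le_mul s12 h3 hd3 (mul_nonneg hb1 hb2)
  have hstep : (‖kPoch k a n‖ / ‖kPoch k c n‖) * (‖kPoch k b p‖ / (p.factorial : ℝ))
        * (‖kPoch k b' q‖ / (q.factorial : ℝ)) * ‖ta‖ ^ p * ‖tb‖ ^ q
      ≤ (C1 * (1 + (n:ℝ)) ^ N1) * (C2 * (1 + (p:ℝ)) ^ N2 * k ^ p)
        * (C3 * (1 + (q:ℝ)) ^ N3 * k ^ q) * ‖ta‖ ^ p * ‖tb‖ ^ q := by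
    apply mul_le_mul_of_nonneg_right _ (pow_nonneg (norm_nonneg tb) q)
    apply mul_le_mul_of_nonneg_right s123 (pow_nonneg (norm_nonneg ta) p)
  apply le_trans hstep
  have hsum : ((1:ℝ) + n) ^ N1 ≤ ((1 + (p:ℝ)) * (1 + (q:ℝ))) ^ N1 := by
    apply pow_le_pow_left₀ (by positivity)
    exact_mod_cast one_add_sum_le p q
  have e1 : (C1 * (1 + (n:ℝ)) ^ N1) * (C2 * (1 + (p:ℝ)) ^ N2 * k ^ p)
        * (C3 * (1 + (q:ℝ)) ^ N3 * k ^ q) * ‖ta‖ ^ p * ‖tb‖ ^ q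
      = C1 * (1 + (n:ℝ)) ^ N1
        * ((C2 * (1 + (p:ℝ)) ^ N2 * k ^ p) * (C3 * (1 + (q:ℝ)) ^ N3 * k ^ q)
            * ‖ta‖ ^ p * ‖tb‖ ^ q) := by ring
  have e2 : (C1 * C2 * C3 * ((1 + (p:ℝ)) ^ (N1 + N2) * ρ1 ^ p)) * ((1 + (q:ℝ)) ^ (N1 + N3) * ρ2 ^ q)
      = C1 * ((1 + (p:ℝ)) * (1 + (q:ℝ))) ^ N1
        * ((C2 * (1 + (p:ℝ)) ^ N2 * k ^ p) * (C3 * (1 + (q:ℝ)) ^ N3 * k ^ q)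
            * ‖ta‖ ^ p * ‖tb‖ ^ q) := by
    rw [hρ1, hρ2, mul_pow, mul_pow, mul_pow, pow_add, pow_add]
    ring
  rw [e1, e2]
  have hRnn : 0 ≤ (C2 * (1 + (p:ℝ)) ^ N2 * k ^ p) * (C3 * (1 + (q:ℝ)) ^ N3 * k ^ q)
      * ‖ta‖ ^ p * ‖tb‖ ^ q := by
    have l2 : 0 ≤ C2 * (1 + (p:ℝ)) ^ N2 * k ^ p :=
      mul_nonneg (mul_nonneg hC2nn (by positivity)) (by positivity)
    have l3 : 0 ≤ C3 * (1 + (q:ℝ)) ^ N3 * k ^ q :=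
      mul_nonneg (mul_nonneg hC3nn (by positivity)) (by positivity)
    exact mul_nonneg (mul_nonneg (mul_nonneg l2 l3) (by positivity)) (by positivity)
  exact mul_le_mul_of_nonneg_right (mul_le_mul_of_nonneg_left hsum hC1nn) hRnn

lemma tsum_prod_eq_tsum_antidiagonal (T : ℕ × ℕ → ℂ) (h : Summable T) :
    ∑' p : ℕ × ℕ, T p = ∑' n : ℕ, ∑ pq ∈ Finset.HasAntidiagonal.antidiagonal n, T pq := by
  rw [← Finset.HasAntidiagonal.sigmaAntidiagonalEquivProd.tsum_eq T]
  rw [Summable.tsum_sigma' (f := fun c : (Σ n : ℕ, Finset.HasAntidiagonal.antidiagonal n) =>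
      T (Finset.HasAntidiagonal.sigmaAntidiagonalEquivProd c))
    (fun n => (hasSum_fintype _).summable)
    (Finset.HasAntidiagonal.sigmaAntidiagonalEquivProd.summable_iff.mpr h)]
  apply tsum_congr
  intro n
  exact Finset.tsum_subtype (Finset.HasAntidiagonal.antidiagonal n) T

end AuxLemmas

theorem generating_relation_F1k2 (k : ℝ) (hk : 0 < k) (α β γ δ t x : ℂ)
    (hα : 0 < α.re) (hβα : α.re < β.re) (hγ : 0 < γ.re) (hδγ : γ.re < δ.re)
    (hx : ‖x‖ < 1 / k) (ht : ‖t‖ < 1 / k)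
    (ht' : ‖(1 - (k : ℂ) * x) * t‖ < 1 / k) :
    ∑' n : ℕ, kPoch k β n * kPoch k γ n / (kPoch k δ n * (n.factorial : ℂ)) *
        hyp2F1k k (-((n : ℂ) * (k : ℂ))) α β x * t ^ n =
      F1k k γ (β - α) α δ t ((1 - (k : ℂ) * x) * t) := by
  have hβ : 0 < β.re := lt_trans hα hβα
  have hδ : 0 < δ.re := lt_trans hγ hδγ
  have hsum := summable_F1k_terms k hk γ (β - α) α δ t ((1 - (k:ℂ) * x) * t) hδ ht ht'
  calc ∑' n : ℕ, kPoch k β n * kPoch k γ n / (kPoch k δ n * (n.factorial : ℂ)) *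
        hyp2F1k k (-((n : ℂ) * (k : ℂ))) α β x * t ^ n
      = ∑' n : ℕ, ∑ pq ∈ Finset.HasAntidiagonal.antidiagonal n,
          kPoch k γ (pq.1 + pq.2) * kPoch k (β - α) pq.1 * kPoch k α pq.2
              / kPoch k δ (pq.1 + pq.2)
            * t ^ pq.1 * ((1 - (k:ℂ) * x) * t) ^ pq.2
            / ((pq.1.factorial : ℂ) * (pq.2.factorial : ℂ)) := by
        apply tsum_congr
        intro n
        exact term_eq k hk α β γ δ t x hβ hδ n
    _ = F1k k γ (β - α) α δ t ((1 - (k:ℂ) * x) * t) := by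
        rw [← tsum_prod_eq_tsum_antidiagonal _ hsum]
        rfl
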